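/- For all real numbers x and w with 0 ≤ x ≤ 1 and 0 ≤ w ≤ 1, one has (1 − w)·w + w·(1 − w) − 3·((1 − x)·w + x·(1 − w)) ≤ 0; equivalently 2w(1 − w) ≤ 3((1 − x)w + x(1 − w)). -/
import Mathlib

/-- For all `x, w ∈ [0,1]`,
`(1 − w)·w + w·(1 − w) − 3·((1 − x)·w + x·(1 − w)) ≤ 0`;
equivalently `2w(1 − w) ≤ 3((1 − x)w + x(1 − w))`. -/
theorem delta_le_zero_prob (x w : ℝ) (hx0 : 0 ≤ x) (hx1 : x ≤ 1)
    (hw0 : 0 ≤ w) (hw1 : w ≤ 1) :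
    (1 - w) * w + w * (1 - w) - 3 * ((1 - x) * w + x * (1 - w)) ≤ 0 ∧
    2 * w * (1 - w) ≤ 3 * ((1 - x) * w + x * (1 - w)) := by
  rcases le_total w (1/2) with h | h <;>
    constructor <;>
    nlinarith [mul_nonneg hx0 hw0, mul_nonneg hx0 (sub_nonneg.2 hw1),
      mul_nonneg (sub_nonneg.2 hx1) hw0,
      mul_nonneg (sub_nonneg.2 hx1) (sub_nonneg.2 hw1),
      mul_nonneg hw0 (sub_nonneg.2 hw1)]
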